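/- arXiv:1201.4217 — 4 statements merged into one kernel-verified Lean document; each statement's English description precedes it below -/
import Mathlib

section
/- Let g : (0,∞) → ℝ be integrable. Then ∫₀^∞ | ∫₀^{x/2} t g(t)/(x² − t²) dt | dx ≤ (2/3) ∫₀^∞ |g(t)| dt. -/
open MeasureTheory Real Set
open scoped ENNReal NNReal

lemma aux_pow2 {x : ℝ} (hx : 0 < x) : x ^ (-2 : ℝ) = (x ^ 2)⁻¹ := by
  rw [show ((-2:ℝ)) = ((-2 : ℤ) : ℝ) by norm_num, rpow_intCast]
  simp [zpow_neg]

lemma aux_x_int {a : ℝ} (ha : 0 < a) (c : ℝ) (hc : 0 ≤ c) :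
    ∫⁻ x in Ici a, ENNReal.ofReal (c / x ^ 2) = ENNReal.ofReal (c / a) := by
  have hrestr : volume.restrict (Ici a) = volume.restrict (Ioi a) :=
    (Measure.restrict_congr_set Ioi_ae_eq_Ici).symm
  rw [hrestr]
  have hint : IntegrableOn (fun x : ℝ => c / x ^ 2) (Ioi a) := by
    have h1 : IntegrableOn (fun x : ℝ => x ^ (-2 : ℝ)) (Ioi a) :=
      integrableOn_Ioi_rpow_of_lt (by norm_num) ha
    refine IntegrableOn.congr_fun (h1.const_mul c) (fun x hx => ?_) measurableSet_Ioi
    rw [aux_pow2 (ha.trans hx), div_eq_mul_inv]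
  rw [← ofReal_integral_eq_lintegral_ofReal hint]
  · congr 1
    have : ∫ x in Ioi a, c / x ^ 2 = ∫ x in Ioi a, c * x ^ (-2 : ℝ) := by
      refine setIntegral_congr_fun measurableSet_Ioi fun x hx => ?_
      rw [aux_pow2 (ha.trans hx), div_eq_mul_inv]
    rw [this, integral_const_mul, integral_Ioi_rpow_of_lt (by norm_num) ha]
    rw [show (-2:ℝ)+1 = -1 by norm_num, rpow_neg ha.le, rpow_one]
    field_simp
  · exact Filter.Eventually.of_forall fun x => by positivity

/-- For integrable `g` on `(0,∞)`,
`∫₀^∞ |∫₀^{x/2} t g(t)/(x² − t²) dt| dx ≤ (2/3) ∫₀^∞ |g(t)| dt`. -/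
theorem near_zero_part_odd_hilbert_bound
    (g : ℝ → ℝ) (hg : IntegrableOn g (Ioi (0 : ℝ))) :
    ∫ x in Ioi (0 : ℝ), |∫ t in Ioc (0 : ℝ) (x / 2), t * g t / (x ^ 2 - t ^ 2)|
      ≤ 2 / 3 * ∫ t in Ioi (0 : ℝ), |g t| := by
  -- replace g by a measurable representative G
  obtain ⟨G, hGsm, hgG⟩ : ∃ G, StronglyMeasurable G ∧ g =ᵐ[volume.restrict (Ioi 0)] G :=
    ⟨hg.1.mk g, hg.1.stronglyMeasurable_mk, hg.1.ae_eq_mk⟩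
  have hGmeas : Measurable G := hGsm.measurable
  have hGint : IntegrableOn G (Ioi 0) := hg.congr_fun_ae hgG
  have hae : ∀ᵐ t : ℝ, t ∈ Ioi (0:ℝ) → g t = G t :=
    (ae_restrict_iff' measurableSet_Ioi).mp hgG
  have hinner : ∀ x : ℝ, (∫ t in Ioc (0:ℝ) (x/2), t * g t / (x^2 - t^2))
      = ∫ t in Ioc (0:ℝ) (x/2), t * G t / (x^2 - t^2) := by
    intro x
    refine integral_congr_ae ?_
    filter_upwards [ae_restrict_of_ae hae, ae_restrict_mem measurableSet_Ioc] with t h1 h2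
    rw [h1 h2.1]
  have hRHS : (∫ t in Ioi (0:ℝ), |g t|) = ∫ t in Ioi (0:ℝ), |G t| :=
    integral_congr_ae (hgG.mono fun t h => by simp [h])
  rw [hRHS]
  simp_rw [hinner]
  -- main argument with measurable G
  set h : ℝ × ℝ → ℝ := fun p => if p.2 ∈ Ioc 0 (p.1/2) then p.2 * G p.2 / (p.1^2 - p.2^2) else 0
    with hh
  have hs : MeasurableSet {p : ℝ × ℝ | p.2 ∈ Ioc 0 (p.1/2)} := by
    have : {p : ℝ × ℝ | p.2 ∈ Ioc 0 (p.1/2)}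
        = {p : ℝ × ℝ | (0:ℝ) < p.2} ∩ {p : ℝ × ℝ | p.2 ≤ p.1/2} := rfl
    rw [this]
    exact (measurableSet_lt measurable_const measurable_snd).inter
      (measurableSet_le measurable_snd (measurable_fst.div_const 2))
  have hhm : Measurable h := by
    refine Measurable.ite hs ?_ measurable_const
    exact ((measurable_snd.mul (hGmeas.comp measurable_snd)).div
      ((measurable_fst.pow_const 2).sub (measurable_snd.pow_const 2)))
  have hIx : ∀ x : ℝ, (∫ t in Ioc (0:ℝ) (x/2), t * G t / (x^2 - t^2)) = ∫ t, h (x, t) := by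
    intro x
    rw [← integral_indicator measurableSet_Ioc]
    congr 1
    ext t
    simp only [hh, indicator_apply]
  simp_rw [hIx]
  have hIsm : StronglyMeasurable fun x => ∫ t, h (x, t) :=
    hhm.stronglyMeasurable.integral_prod_right'
  have hRHSnn : (0:ℝ) ≤ 2 / 3 * ∫ t in Ioi (0:ℝ), |G t| :=
    mul_nonneg (by norm_num) (integral_nonneg fun t => abs_nonneg _)
  have key : (∫⁻ x in Ioi (0:ℝ), ENNReal.ofReal |∫ t, h (x, t)|)
      ≤ ENNReal.ofReal (2 / 3 * ∫ t in Ioi (0:ℝ), |G t|) := by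
    have step1 : (∫⁻ x in Ioi (0:ℝ), ENNReal.ofReal |∫ t, h (x, t)|)
        ≤ ∫⁻ x in Ioi (0:ℝ), ∫⁻ t, (‖h (x, t)‖₊ : ℝ≥0∞) := by
      refine lintegral_mono fun x => ?_
      rw [← Real.enorm_eq_ofReal_abs]
      exact enorm_integral_le_lintegral_enorm _
    have step2 : (∫⁻ x in Ioi (0:ℝ), ∫⁻ t, (‖h (x, t)‖₊ : ℝ≥0∞))
        = ∫⁻ t, ∫⁻ x in Ioi (0:ℝ), (‖h (x, t)‖₊ : ℝ≥0∞) :=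
      lintegral_lintegral_swap (hhm.enorm.aemeasurable)
    have step3 : ∀ t : ℝ, (∫⁻ x in Ioi (0:ℝ), (‖h (x, t)‖₊ : ℝ≥0∞))
        ≤ (Ioi (0:ℝ)).indicator (fun t => ENNReal.ofReal (2/3 * |G t|)) t := by
      intro t
      by_cases ht : 0 < t
      · have h2t : (0:ℝ) < 2*t := by linarith
        rw [indicator_of_mem (mem_Ioi.mpr ht)]
        have hsub : Ici (2*t) ⊆ Ioi (0:ℝ) := fun x hx => lt_of_lt_of_le h2t hx
        calc (∫⁻ x in Ioi (0:ℝ), (‖h (x, t)‖₊ : ℝ≥0∞))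
            ≤ ∫⁻ x in Ioi (0:ℝ),
                (Ici (2*t)).indicator (fun x => ENNReal.ofReal (4/3*t*|G t| / x^2)) x := by
              refine lintegral_mono fun x => ?_
              by_cases hx : x ∈ Ici (2*t)
              · rw [indicator_of_mem hx]
                have hx2t : 2*t ≤ x := hx
                have hx0 : 0 < x := hsub hx
                have hden : 0 < x^2 - t^2 := by nlinarith
                have hmem : t ∈ Ioc 0 (x/2) := ⟨ht, by linarith⟩
                rw [show h (x, t) = t * G t / (x^2 - t^2) from if_pos hmem,
                  ← enorm_eq_nnnorm, Real.enorm_eq_ofReal_abs]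
                apply ENNReal.ofReal_le_ofReal
                rw [abs_div, abs_of_pos hden, abs_mul, abs_of_pos ht,
                  div_le_div_iff₀ hden (by positivity)]
                nlinarith [mul_nonneg (mul_nonneg ht.le (abs_nonneg (G t)))
                  (show (0:ℝ) ≤ x^2 - 4*t^2 by nlinarith)]
              · have hx2t : ¬ (2*t ≤ x) := hx
                have : h (x, t) = 0 := if_neg (fun hm => hx2t (by linarith [hm.2]))
                simp [this, indicator_of_notMem hx]
          _ = ∫⁻ x in Ici (2*t), ENNReal.ofReal (4/3*t*|G t| / x^2) := by
              rw [lintegral_indicator measurableSet_Ici,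
                Measure.restrict_restrict measurableSet_Ici, inter_eq_left.mpr hsub]
          _ = ENNReal.ofReal (4/3*t*|G t| / (2*t)) := aux_x_int h2t _ (by positivity)
          _ = ENNReal.ofReal (2/3 * |G t|) := by
              congr 1
              field_simp
              ring
      · have hz : ∀ x : ℝ, h (x, t) = 0 := fun x => if_neg (fun hm => ht hm.1)
        simp [hz]
    have step4 : (∫⁻ t, (Ioi (0:ℝ)).indicator (fun t => ENNReal.ofReal (2/3 * |G t|)) t)
        = ENNReal.ofReal (2/3 * ∫ t in Ioi (0:ℝ), |G t|) := by
      rw [lintegral_indicator measurableSet_Ioi,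
        ← ofReal_integral_eq_lintegral_ofReal (hGint.abs.const_mul _)
          (Filter.Eventually.of_forall fun t => by positivity)]
      rw [integral_const_mul]
    calc (∫⁻ x in Ioi (0:ℝ), ENNReal.ofReal |∫ t, h (x, t)|)
        ≤ ∫⁻ x in Ioi (0:ℝ), ∫⁻ t, (‖h (x, t)‖₊ : ℝ≥0∞) := step1
      _ = ∫⁻ t, ∫⁻ x in Ioi (0:ℝ), (‖h (x, t)‖₊ : ℝ≥0∞) := step2
      _ ≤ ∫⁻ t, (Ioi (0:ℝ)).indicator (fun t => ENNReal.ofReal (2/3 * |G t|)) t :=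
          lintegral_mono step3
      _ = ENNReal.ofReal (2/3 * ∫ t in Ioi (0:ℝ), |G t|) := step4
  calc (∫ x in Ioi (0:ℝ), |∫ t, h (x, t)|)
      = (∫⁻ x in Ioi (0:ℝ), ENNReal.ofReal |∫ t, h (x, t)|).toReal :=
        integral_eq_lintegral_of_nonneg_ae
          (Filter.Eventually.of_forall fun x => abs_nonneg _)
          (hIsm.measurable.abs.aestronglyMeasurable)
    _ ≤ (ENNReal.ofReal (2/3 * ∫ t in Ioi (0:ℝ), |G t|)).toReal :=
        ENNReal.toReal_mono ENNReal.ofReal_ne_top key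
    _ = 2/3 * ∫ t in Ioi (0:ℝ), |G t| := ENNReal.toReal_ofReal hRHSnn
end

section
/- There exists a constant C > 0 such that for every integrable g : (0,∞) → ℝ with ∫_{1/2}^∞ |g(t)| log(3t) dt < ∞, one has ∫₁^∞ | ∫_{x/2}^{x − 1/2} t g(t)/(x² − t²) dt | dx ≤ C ∫_{1/2}^∞ |g(t)| log(3t) dt. -/
open MeasureTheory Real Set
open scoped ENNReal NNReal

/-- There is a constant `C > 0` such that for every integrable `g` on `(0,∞)` with
`∫_{1/2}^∞ |g(t)| log(3t) dt < ∞`,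
`∫₁^∞ |∫_{x/2}^{x−1/2} t g(t)/(x² − t²) dt| dx ≤ C ∫_{1/2}^∞ |g(t)| log(3t) dt`. -/
theorem left_middle_part_log_bound :
    ∃ C : ℝ, 0 < C ∧ ∀ g : ℝ → ℝ, IntegrableOn g (Ioi (0 : ℝ)) →
      IntegrableOn (fun t => |g t| * Real.log (3 * t)) (Ioi (1 / 2 : ℝ)) →
      ∫ x in Ioi (1 : ℝ), |∫ t in Icc (x / 2) (x - 1 / 2), t * g t / (x ^ 2 - t ^ 2)|
        ≤ C * ∫ t in Ioi (1 / 2 : ℝ), |g t| * Real.log (3 * t) := by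
  refine ⟨1, one_pos, fun g hg hglog => ?_⟩
  rw [one_mul]
  have hRHSnn : 0 ≤ ∫ t in Ioi (1/2 : ℝ), |g t| * Real.log (3 * t) := by
    apply integral_nonneg_of_ae
    filter_upwards [ae_restrict_mem measurableSet_Ioi] with t ht
    have h1 : (1:ℝ) ≤ 3 * t := by
      have : (1/2 : ℝ) < t := ht
      linarith
    exact mul_nonneg (abs_nonneg _) (Real.log_nonneg h1)
  by_cases hInt : Integrable
      (fun x => |∫ t in Icc (x/2) (x - 1/2), t * g t / (x ^ 2 - t ^ 2)|)
      (volume.restrict (Ioi (1:ℝ)))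
  swap
  · rw [show (∫ x in Ioi (1:ℝ), |∫ t in Icc (x/2) (x - 1/2), t * g t / (x ^ 2 - t ^ 2)|) = 0
      from integral_undef hInt]
    exact hRHSnn
  set μ := volume.restrict (Ioi (1:ℝ)) with hμ
  set ν := volume.restrict (Ioi (1/2 : ℝ)) with hν
  set F : ℝ × ℝ → ℝ≥0∞ := fun p =>
    (‖g p.2‖₊ : ℝ≥0∞) * Set.indicator {q : ℝ × ℝ | q.1/2 ≤ q.2 ∧ q.2 ≤ q.1 - 1/2}
      (fun q => ENNReal.ofReal (q.2 / (q.1 ^ 2 - q.2 ^ 2))) p with hFdef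
  -- measurability facts
  have hS : MeasurableSet {q : ℝ × ℝ | q.1/2 ≤ q.2 ∧ q.2 ≤ q.1 - 1/2} := by
    have h : {q : ℝ × ℝ | q.1/2 ≤ q.2 ∧ q.2 ≤ q.1 - 1/2}
        = {q : ℝ × ℝ | q.1/2 ≤ q.2} ∩ {q : ℝ × ℝ | q.2 ≤ q.1 - 1/2} := rfl
    rw [h]
    exact (measurableSet_le (measurable_fst.div_const 2) measurable_snd).inter
      (measurableSet_le measurable_snd (measurable_fst.sub measurable_const))
  have hφm : Measurable fun q : ℝ × ℝ => ENNReal.ofReal (q.2 / (q.1 ^ 2 - q.2 ^ 2)) := by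
    apply ENNReal.measurable_ofReal.comp
    exact measurable_snd.div ((measurable_fst.pow_const 2).sub (measurable_snd.pow_const 2))
  have hgm : AEMeasurable (fun t => (‖g t‖₊ : ℝ≥0∞)) ν :=
    ((hg.mono_set (Ioi_subset_Ioi (by norm_num))).aestronglyMeasurable).enorm
  have hFm : AEMeasurable F (μ.prod ν) := by
    refine AEMeasurable.mul ?_ ((hφm.indicator hS).aemeasurable)
    exact hgm.comp_quasiMeasurePreserving Measure.quasiMeasurePreserving_snd
  -- Step A : pointwise bound of the inner integral
  have stepA : ∀ x ∈ Ioi (1:ℝ),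
      ENNReal.ofReal |∫ t in Icc (x/2) (x - 1/2), t * g t / (x ^ 2 - t ^ 2)|
        ≤ ∫⁻ t, F (x, t) ∂ν := by
    intro x hx
    have hx1 : (1:ℝ) < x := hx
    have h1 : ENNReal.ofReal |∫ t in Icc (x/2) (x - 1/2), t * g t / (x ^ 2 - t ^ 2)|
        ≤ ∫⁻ t in Icc (x/2) (x - 1/2), ‖t * g t / (x ^ 2 - t ^ 2)‖₊ := by
      rw [← enorm_eq_ofReal_abs]
      exact enorm_integral_le_lintegral_enorm _
    refine h1.trans_eq ?_
    have hind : ∀ t, F (x, t) = Set.indicator (Icc (x/2) (x - 1/2))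
        (fun t => (‖g t‖₊ : ℝ≥0∞) * ENNReal.ofReal (t / (x ^ 2 - t ^ 2))) t := by
      intro t
      by_cases hmem : t ∈ Icc (x/2) (x - 1/2)
      · have hmem' : (x, t) ∈ {q : ℝ × ℝ | q.1/2 ≤ q.2 ∧ q.2 ≤ q.1 - 1/2} :=
          ⟨hmem.1, hmem.2⟩
        simp only [hFdef, Set.indicator_of_mem hmem, Set.indicator_of_mem hmem']
      · have hmem' : (x, t) ∉ {q : ℝ × ℝ | q.1/2 ≤ q.2 ∧ q.2 ≤ q.1 - 1/2} := by
          intro h; exact hmem ⟨h.1, h.2⟩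
        simp only [hFdef, Set.indicator_of_notMem hmem, Set.indicator_of_notMem hmem',
          mul_zero]
    have hrestr : ν.restrict (Icc (x/2) (x - 1/2)) = volume.restrict (Icc (x/2) (x - 1/2)) := by
      rw [hν, Measure.restrict_restrict measurableSet_Icc, Set.inter_eq_left.2]
      intro t ht
      have h := ht.1
      show (1/2:ℝ) < t
      linarith
    symm
    calc ∫⁻ t, F (x, t) ∂ν
        = ∫⁻ t, Set.indicator (Icc (x/2) (x - 1/2))
            (fun t => (‖g t‖₊ : ℝ≥0∞) * ENNReal.ofReal (t / (x ^ 2 - t ^ 2))) t ∂ν :=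
          lintegral_congr hind
      _ = ∫⁻ t in Icc (x/2) (x - 1/2),
            (‖g t‖₊ : ℝ≥0∞) * ENNReal.ofReal (t / (x ^ 2 - t ^ 2)) ∂ν :=
          lintegral_indicator measurableSet_Icc _
      _ = ∫⁻ t in Icc (x/2) (x - 1/2),
            (‖g t‖₊ : ℝ≥0∞) * ENNReal.ofReal (t / (x ^ 2 - t ^ 2)) := by rw [hrestr]
      _ = ∫⁻ t in Icc (x/2) (x - 1/2), (‖t * g t / (x ^ 2 - t ^ 2)‖₊ : ℝ≥0∞) := by
          refine setLIntegral_congr_fun measurableSet_Icc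
            (fun t ht => ?_)
          have ht0 : (0:ℝ) < t := by
            have := ht.1; linarith
          have hd : (0:ℝ) < x ^ 2 - t ^ 2 := by
            have h2 : t < x := by have := ht.2; linarith
            nlinarith
          rw [← enorm_eq_nnnorm (t * g t / (x ^ 2 - t ^ 2)), enorm_eq_ofReal_abs (t * g t / (x ^ 2 - t ^ 2)), abs_div, abs_mul,
            abs_of_pos ht0, abs_of_pos hd,
            show t * |g t| / (x ^ 2 - t ^ 2) = |g t| * (t / (x ^ 2 - t ^ 2)) by ring,
            ENNReal.ofReal_mul (abs_nonneg _), ← enorm_eq_nnnorm, enorm_eq_ofReal_abs]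
  -- Step C : kernel bound
  have stepC : ∀ t ∈ Ioi (1/2 : ℝ),
      (∫⁻ x, F (x, t) ∂μ) ≤ (‖g t‖₊ : ℝ≥0∞) * ENNReal.ofReal (Real.log (3 * t)) := by
    intro t ht
    have ht2 : (1/2 : ℝ) < t := ht
    have hind : ∀ x, F (x, t) = (‖g t‖₊ : ℝ≥0∞) * Set.indicator (Icc (t + 1/2) (2*t))
        (fun x => ENNReal.ofReal (t / (x ^ 2 - t ^ 2))) x := by
      intro x
      by_cases hmem : x ∈ Icc (t + 1/2) (2*t)
      · have hmem' : (x, t) ∈ {q : ℝ × ℝ | q.1/2 ≤ q.2 ∧ q.2 ≤ q.1 - 1/2} := by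
          constructor
          · show x/2 ≤ t; have := hmem.2; linarith
          · show t ≤ x - 1/2; have := hmem.1; linarith
        simp only [hFdef, Set.indicator_of_mem hmem, Set.indicator_of_mem hmem']
      · have hmem' : (x, t) ∉ {q : ℝ × ℝ | q.1/2 ≤ q.2 ∧ q.2 ≤ q.1 - 1/2} := by
          intro h
          refine hmem ⟨?_, ?_⟩
          · have := h.2; show t + 1/2 ≤ x; linarith
          · have := h.1; show x ≤ 2*t; linarith
        simp only [hFdef, Set.indicator_of_notMem hmem, Set.indicator_of_notMem hmem',
          mul_zero]
    calc ∫⁻ x, F (x, t) ∂μ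
        = (‖g t‖₊ : ℝ≥0∞) * ∫⁻ x, Set.indicator (Icc (t + 1/2) (2*t))
            (fun x => ENNReal.ofReal (t / (x ^ 2 - t ^ 2))) x ∂μ := by
          rw [show (fun x => F (x, t)) = fun x => (‖g t‖₊ : ℝ≥0∞) *
              Set.indicator (Icc (t + 1/2) (2*t))
                (fun x => ENNReal.ofReal (t / (x ^ 2 - t ^ 2))) x from funext hind]
          exact lintegral_const_mul' _ _ ENNReal.coe_ne_top
      _ ≤ (‖g t‖₊ : ℝ≥0∞) * ENNReal.ofReal (Real.log (3 * t)) := by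
          refine mul_le_mul_right ?_ _
          have hrestr : μ.restrict (Icc (t + 1/2) (2*t))
              = volume.restrict (Icc (t + 1/2) (2*t)) := by
            rw [hμ, Measure.restrict_restrict measurableSet_Icc, Set.inter_eq_left.2]
            intro x hx
            have := hx.1
            show (1:ℝ) < x
            linarith
          rw [lintegral_indicator measurableSet_Icc, hrestr]
          -- pointwise bound by 1/(2(x-t))
          have hmono : ∫⁻ x in Icc (t + 1/2) (2*t), ENNReal.ofReal (t / (x ^ 2 - t ^ 2))
              ≤ ∫⁻ x in Icc (t + 1/2) (2*t), ENNReal.ofReal (1 / (2 * (x - t))) := by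
            refine setLIntegral_mono (by fun_prop) fun x hx => ?_
            refine ENNReal.ofReal_le_ofReal ?_
            have hx1 : t + 1/2 ≤ x := hx.1
            have hx2 : x ≤ 2*t := hx.2
            have hxt : (0:ℝ) < x - t := by linarith
            have hxpt : (0:ℝ) < x + t := by linarith
            rw [show x ^ 2 - t ^ 2 = (x - t) * (x + t) by ring]
            rw [div_le_div_iff₀ (by positivity) (by positivity)]
            nlinarith
          refine hmono.trans ?_
          have hcont : IntegrableOn (fun x => 1 / (2 * (x - t))) (Icc (t + 1/2) (2*t)) := by
            apply ContinuousOn.integrableOn_compact isCompact_Icc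
            apply ContinuousOn.div continuousOn_const (by fun_prop)
            intro x hx
            have := hx.1
            exact ne_of_gt (by linarith : (0:ℝ) < 2 * (x - t))
          have hnn : 0 ≤ᵐ[volume.restrict (Icc (t + 1/2) (2*t))]
              fun x => 1 / (2 * (x - t)) := by
            filter_upwards [ae_restrict_mem measurableSet_Icc] with x hx
            have h1 := hx.1
            have h0 : (0:ℝ) < x - t := by linarith
            positivity
          rw [← ofReal_integral_eq_lintegral_ofReal hcont hnn]
          refine ENNReal.ofReal_le_ofReal ?_
          have hab : t + 1/2 ≤ 2*t := by linarith
          have hval : (∫ x in Icc (t + 1/2) (2*t), 1 / (2 * (x - t)))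
              = (1/2) * Real.log (2*t) := by
            rw [integral_Icc_eq_integral_Ioc, ← intervalIntegral.integral_of_le hab]
            have h1 : (∫ x in (t + 1/2)..(2*t), 1 / (2 * (x - t)))
                = ∫ x in (t + 1/2)..(2*t), (fun y => (1/2) * (1/y)) (x - t) := by
              refine intervalIntegral.integral_congr fun x _ => ?_
              field_simp
            rw [h1, intervalIntegral.integral_comp_sub_right (fun y => (1/2) * (1/y)) t,
              show t + 1/2 - t = 1/2 by ring, show 2*t - t = t by ring,
              intervalIntegral.integral_const_mul, integral_one_div, div_div_eq_mul_div,
              div_one, mul_comm t 2]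
            intro h
            rw [Set.uIcc_of_le (by linarith : (1/2:ℝ) ≤ t)] at h
            have := h.1
            linarith
          rw [hval]
          have hlog1 : (0:ℝ) ≤ Real.log (2*t) := Real.log_nonneg (by linarith)
          have hlog2 : Real.log (2*t) ≤ Real.log (3*t) :=
            Real.log_le_log (by linarith) (by linarith)
          linarith
  -- main chain
  have key : (∫⁻ x, ENNReal.ofReal
        |∫ t in Icc (x/2) (x - 1/2), t * g t / (x ^ 2 - t ^ 2)| ∂μ)
      ≤ ENNReal.ofReal (∫ t in Ioi (1/2 : ℝ), |g t| * Real.log (3 * t)) := by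
    calc (∫⁻ x, ENNReal.ofReal
          |∫ t in Icc (x/2) (x - 1/2), t * g t / (x ^ 2 - t ^ 2)| ∂μ)
        ≤ ∫⁻ x, (∫⁻ t, F (x, t) ∂ν) ∂μ := by
          refine lintegral_mono_ae ?_
          filter_upwards [ae_restrict_mem measurableSet_Ioi] with x hx using stepA x hx
      _ = ∫⁻ t, (∫⁻ x, F (x, t) ∂μ) ∂ν := lintegral_lintegral_swap hFm
      _ ≤ ∫⁻ t, (‖g t‖₊ : ℝ≥0∞) * ENNReal.ofReal (Real.log (3 * t)) ∂ν := by
          refine lintegral_mono_ae ?_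
          filter_upwards [ae_restrict_mem measurableSet_Ioi] with t ht using stepC t ht
      _ = ∫⁻ t, ENNReal.ofReal (|g t| * Real.log (3 * t)) ∂ν := by
          refine lintegral_congr fun t => ?_
          rw [← enorm_eq_nnnorm, enorm_eq_ofReal_abs, ← ENNReal.ofReal_mul (abs_nonneg _)]
      _ = ENNReal.ofReal (∫ t in Ioi (1/2 : ℝ), |g t| * Real.log (3 * t)) := by
          rw [← ofReal_integral_eq_lintegral_ofReal hglog ?_]
          filter_upwards [ae_restrict_mem measurableSet_Ioi] with t ht
          have h1 : (1:ℝ) ≤ 3 * t := by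
            have : (1/2 : ℝ) < t := ht
            linarith
          exact mul_nonneg (abs_nonneg _) (Real.log_nonneg h1)
  rw [integral_eq_lintegral_of_nonneg_ae
    (Filter.Eventually.of_forall fun x => abs_nonneg _) hInt.1]
  exact ENNReal.toReal_le_of_le_ofReal hRHSnn key
end

section
/- There exists a constant C > 0 such that for every integrable g : (0,∞) → ℝ with ∫_{1/2}^∞ |g(t)| log(3t) dt < ∞, one has ∫₁^∞ | ∫_{x + 1/2}^{3x/2} t g(t)/(x² − t²) dt | dx ≤ C ∫_{1/2}^∞ |g(t)| log(3t) dt. -/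
open MeasureTheory Real Set
open scoped ENNReal

lemma aux_ftc (t : ℝ) (ht : 3/2 ≤ t) :
    ∫ x in (2*t/3)..(t - 1/2), t / (t^2 - x^2) ≤ Real.log (3*t) := by
  have hab : 2*t/3 ≤ t - 1/2 := by linarith
  set φ : ℝ → ℝ := fun x => (1/2) * (Real.log (t + x) - Real.log (t - x)) with hφ
  have hderiv : ∀ x ∈ Set.uIcc (2*t/3) (t - 1/2), HasDerivAt φ (t / (t^2 - x^2)) x := by
    intro x hx
    rw [Set.uIcc_of_le hab] at hx
    obtain ⟨hx1, hx2⟩ := hx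
    have h1 : 0 < t + x := by linarith
    have h2 : 0 < t - x := by linarith
    have hd1 : HasDerivAt (fun x => Real.log (t + x)) (1/(t+x)) x := by
      have := (Real.hasDerivAt_log h1.ne').comp x ((hasDerivAt_id x).const_add t)
      simpa [one_div, Function.comp_def] using this
    have hd2 : HasDerivAt (fun x => Real.log (t - x)) (-(1/(t-x))) x := by
      have := (Real.hasDerivAt_log h2.ne').comp x (((hasDerivAt_id x).neg).const_add t)
      simpa [one_div, sub_eq_add_neg, Function.comp_def] using this
    have hd := (hd1.sub hd2).const_mul (1/2 : ℝ)
    refine HasDerivAt.congr_deriv hd ?_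
    have hne : t^2 - x^2 ≠ 0 := by nlinarith
    rw [show t^2 - x^2 = (t+x)*(t-x) by ring]
    field_simp
    ring
  have hcont : IntervalIntegrable (fun x => t / (t^2 - x^2)) volume (2*t/3) (t - 1/2) := by
    apply ContinuousOn.intervalIntegrable
    apply ContinuousOn.div continuousOn_const (by fun_prop)
    intro x hx
    rw [Set.uIcc_of_le hab] at hx
    obtain ⟨hx1, hx2⟩ := hx
    nlinarith
  rw [intervalIntegral.integral_eq_sub_of_hasDerivAt hderiv hcont]
  have h1 : 0 < t - 1/2 := by linarith
  have h2 : φ (2*t/3) ≥ 0 := by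
    have : Real.log (t - 2*t/3) ≤ Real.log (t + 2*t/3) := by
      apply Real.log_le_log (by linarith) (by linarith)
    simp only [hφ]
    linarith
  have h3 : φ (t - 1/2) ≤ Real.log (3*t) := by
    simp only [hφ]
    have h4 : t + (t - 1/2) = 2*t - 1/2 := by ring
    have h5 : t - (t - 1/2) = 1/2 := by ring
    rw [h4, h5]
    have hlog : Real.log (2*t - 1/2) - Real.log (1/2) = Real.log (4*t - 1) := by
      rw [← Real.log_div (by linarith) (by norm_num)]
      congr 1
      ring
    rw [hlog]
    have h6 : Real.log (4*t - 1) ≤ Real.log ((3*t)^2) := by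
      apply Real.log_le_log (by linarith)
      nlinarith
    have h7 : Real.log ((3*t)^2) = 2 * Real.log (3*t) := by
      rw [Real.log_pow]; push_cast; ring
    linarith
  linarith

lemma aux_inner (g : ℝ → ℝ) (t : ℝ)
    (hftc : ∀ s : ℝ, 3/2 ≤ s → ∫ x in (2*s/3)..(s - 1/2), s / (s^2 - x^2) ≤ Real.log (3*s)) :
    ∫⁻ x in Ioi (1:ℝ), ENNReal.ofReal
        ((Icc (x + 1/2) (3/2 * x)).indicator (fun s => |s * g s / (x^2 - s^2)|) t)
      ≤ (Ioi (1/2:ℝ)).indicator (fun s => ENNReal.ofReal (|g s| * Real.log (3*s))) t := by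
  by_cases ht : 3/2 < t
  · -- pointwise rewrite of the integrand as an x-indicator
    have hpt : ∀ x : ℝ, ENNReal.ofReal
        ((Icc (x + 1/2) (3/2 * x)).indicator (fun s => |s * g s / (x^2 - s^2)|) t)
        = (Icc (2*t/3) (t - 1/2)).indicator
            (fun x => ENNReal.ofReal (t / (t^2 - x^2) * |g t|)) x := by
      intro x
      by_cases h : x ∈ Icc (2*t/3) (t - 1/2)
      · obtain ⟨h1, h2⟩ := h
        have hmem : t ∈ Icc (x + 1/2) (3/2 * x) := ⟨by linarith, by linarith⟩
        rw [Set.indicator_of_mem hmem, Set.indicator_of_mem (Set.mem_Icc.2 ⟨h1, h2⟩)]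
        congr 1
        have hx0 : (0:ℝ) < x := by linarith
        have hneg : x^2 - t^2 < 0 := by nlinarith
        rw [abs_div, abs_mul, abs_of_pos (show (0:ℝ) < t by linarith), abs_of_neg hneg]
        field_simp
        rw [show t^2 - x^2 = -(x^2 - t^2) by ring, div_neg]
      · have hnot : t ∉ Icc (x + 1/2) (3/2 * x) := by
          intro hmem
          obtain ⟨ha, hb⟩ := hmem
          exact h ⟨by linarith, by linarith⟩
        rw [Set.indicator_of_notMem hnot, Set.indicator_of_notMem h, ENNReal.ofReal_zero]
    simp_rw [hpt]
    have hsub : Icc (2*t/3) (t - 1/2) ⊆ Ioi (1:ℝ) := by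
      intro x hx
      exact lt_of_lt_of_le (by linarith) hx.1
    rw [lintegral_indicator measurableSet_Icc _, Measure.restrict_restrict measurableSet_Icc,
      Set.inter_eq_self_of_subset_left hsub]
    have hne : ∀ x ∈ Icc (2*t/3) (t - 1/2), (0:ℝ) < t^2 - x^2 := by
      intro x hx
      obtain ⟨h1, h2⟩ := hx
      nlinarith
    have hint : IntegrableOn (fun x => t / (t^2 - x^2) * |g t|) (Icc (2*t/3) (t - 1/2)) := by
      apply ContinuousOn.integrableOn_Icc
      apply ContinuousOn.mul _ continuousOn_const
      exact ContinuousOn.div continuousOn_const (by fun_prop) (fun x hx => (hne x hx).ne')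
    have hnn : 0 ≤ᵐ[volume.restrict (Icc (2*t/3) (t - 1/2))]
        (fun x => t / (t^2 - x^2) * |g t|) := by
      refine (ae_restrict_iff' measurableSet_Icc).2 (ae_of_all _ fun x hx => ?_)
      have := hne x hx
      positivity
    rw [← ofReal_integral_eq_lintegral_ofReal hint hnn]
    have hIcc : ∫ x in Icc (2*t/3) (t - 1/2), t / (t^2 - x^2) * |g t|
        = (∫ x in (2*t/3)..(t - 1/2), t / (t^2 - x^2)) * |g t| := by
      rw [MeasureTheory.integral_Icc_eq_integral_Ioc,
        ← intervalIntegral.integral_of_le (by linarith : 2*t/3 ≤ t - 1/2),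
        intervalIntegral.integral_mul_const]
    rw [hIcc, Set.indicator_of_mem (show t ∈ Ioi (1/2:ℝ) by simp; linarith)]
    apply ENNReal.ofReal_le_ofReal
    rw [mul_comm (|g t|)]
    exact mul_le_mul_of_nonneg_right (hftc t (le_of_lt ht)) (abs_nonneg _)
  · -- the strip is empty
    push_neg at ht
    have : ∀ x ∈ Ioi (1:ℝ), ENNReal.ofReal
        ((Icc (x + 1/2) (3/2 * x)).indicator (fun s => |s * g s / (x^2 - s^2)|) t) = 0 := by
      intro x hx
      simp only [mem_Ioi] at hx
      have : t ∉ Icc (x + 1/2) (3/2 * x) := by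
        intro hmem
        have := hmem.1
        linarith
      rw [Set.indicator_of_notMem this, ENNReal.ofReal_zero]
    rw [setLIntegral_congr_fun measurableSet_Ioi this]
    simp

lemma aux_key (g : ℝ → ℝ) (hm : Measurable g)
    (hlog : IntegrableOn (fun t => |g t| * Real.log (3 * t)) (Ioi (1/2 : ℝ)))
    (hinner : ∀ t : ℝ,
      ∫⁻ x in Ioi (1:ℝ), ENNReal.ofReal
          ((Icc (x + 1/2) (3/2 * x)).indicator (fun s => |s * g s / (x^2 - s^2)|) t)
        ≤ (Ioi (1/2:ℝ)).indicator (fun s => ENNReal.ofReal (|g s| * Real.log (3*s))) t) :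
    ∫ x in Ioi (1:ℝ), |∫ t in Icc (x + 1/2) (3/2 * x), t * g t / (x^2 - t^2)|
      ≤ ∫ t in Ioi (1/2 : ℝ), |g t| * Real.log (3 * t) := by
  set F : ℝ → ℝ := fun x => ∫ t in Icc (x + 1/2) (3/2 * x), t * g t / (x^2 - t^2) with hF
  -- joint measurability
  set A : Set (ℝ × ℝ) := {p : ℝ × ℝ | p.1 + 1/2 ≤ p.2 ∧ p.2 ≤ 3/2 * p.1} with hA
  have hAm : MeasurableSet A := by
    have h1 : MeasurableSet {p : ℝ × ℝ | p.1 + 1/2 ≤ p.2} :=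
      measurableSet_le (by fun_prop) (by fun_prop)
    have h2 : MeasurableSet {p : ℝ × ℝ | p.2 ≤ 3/2 * p.1} :=
      measurableSet_le (by fun_prop) (by fun_prop)
    exact h1.inter h2
  have hjm : Measurable (fun p : ℝ × ℝ => A.indicator
      (fun q : ℝ × ℝ => q.2 * g q.2 / (q.1^2 - q.2^2)) p) := by
    apply Measurable.indicator _ hAm
    fun_prop
  have hFeq : ∀ x : ℝ, F x = ∫ t : ℝ, A.indicator
      (fun q : ℝ × ℝ => q.2 * g q.2 / (q.1^2 - q.2^2)) (x, t) := by
    intro x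
    rw [hF]
    have : ∀ t : ℝ, A.indicator (fun q : ℝ × ℝ => q.2 * g q.2 / (q.1^2 - q.2^2)) (x, t)
        = (Icc (x + 1/2) (3/2 * x)).indicator (fun t => t * g t / (x^2 - t^2)) t := by
      intro t
      simp only [Set.indicator_apply, hA, Set.mem_setOf_eq, Set.mem_Icc]
    simp only [this]
    rw [integral_indicator measurableSet_Icc]
  have hFm : StronglyMeasurable F := by
    rw [show F = _ from funext hFeq]
    exact StronglyMeasurable.integral_prod_right (hjm.stronglyMeasurable)
  -- express LHS via lintegral
  have habsm : AEStronglyMeasurable (fun x => |F x|) (volume.restrict (Ioi (1:ℝ))) :=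
    (hFm.measurable.abs).aestronglyMeasurable.restrict
  have hLHS : ∫ x in Ioi (1:ℝ), |F x|
      = (∫⁻ x in Ioi (1:ℝ), ENNReal.ofReal |F x|).toReal := by
    rw [integral_eq_lintegral_of_nonneg_ae (ae_of_all _ fun x => abs_nonneg (F x)) habsm]
  -- bound pointwise by the lintegral of absolute values
  set H : ℝ → ℝ → ℝ≥0∞ := fun x t => ENNReal.ofReal
      ((Icc (x + 1/2) (3/2 * x)).indicator (fun s => |s * g s / (x^2 - s^2)|) t) with hH
  have hpt : ∀ x : ℝ, ENNReal.ofReal |F x| ≤ ∫⁻ t : ℝ, H x t := by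
    intro x
    have h1 : (‖F x‖₊ : ℝ≥0∞) ≤ ∫⁻ t in Icc (x + 1/2) (3/2 * x),
        ‖t * g t / (x^2 - t^2)‖₊ := enorm_integral_le_lintegral_enorm _
    have h2 : ∫⁻ t : ℝ, H x t = ∫⁻ t in Icc (x + 1/2) (3/2 * x),
        ‖t * g t / (x^2 - t^2)‖₊ := by
      rw [hH]
      simp only
      have : ∀ t : ℝ, ENNReal.ofReal
          ((Icc (x + 1/2) (3/2 * x)).indicator (fun s => |s * g s / (x^2 - s^2)|) t)
          = (Icc (x + 1/2) (3/2 * x)).indicator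
              (fun t => (‖t * g t / (x^2 - t^2)‖₊ : ℝ≥0∞)) t := by
        intro t
        by_cases h : t ∈ Icc (x + 1/2) (3/2 * x)
        · rw [Set.indicator_of_mem h, Set.indicator_of_mem h, ← enorm_eq_nnnorm, Real.enorm_eq_ofReal_abs]
        · rw [Set.indicator_of_notMem h, Set.indicator_of_notMem h, ENNReal.ofReal_zero]
      simp_rw [this]
      rw [lintegral_indicator measurableSet_Icc _]
    rw [h2, ← Real.enorm_eq_ofReal_abs]
    exact h1
  -- Tonelli
  have hswap : ∫⁻ x in Ioi (1:ℝ), ∫⁻ t : ℝ, H x t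
      = ∫⁻ t : ℝ, ∫⁻ x in Ioi (1:ℝ), H x t := by
    apply lintegral_lintegral_swap
    have : Function.uncurry H = fun p : ℝ × ℝ => ENNReal.ofReal
        (A.indicator (fun q : ℝ × ℝ => |q.2 * g q.2 / (q.1^2 - q.2^2)|) p) := by
      funext p
      simp only [Function.uncurry, hH, Set.indicator_apply, Set.mem_Icc, hA, Set.mem_setOf_eq]
    rw [this]
    apply Measurable.aemeasurable
    apply ENNReal.measurable_ofReal.comp
    apply Measurable.indicator _ hAm
    fun_prop
  -- assemble
  set R : ℝ := ∫ t in Ioi (1/2 : ℝ), |g t| * Real.log (3 * t) with hR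
  have hRnn : 0 ≤ R := by
    apply setIntegral_nonneg measurableSet_Ioi
    intro t ht
    simp only [mem_Ioi] at ht
    have : 0 < Real.log (3 * t) := Real.log_pos (by linarith)
    positivity
  have hfinal : ∫⁻ x in Ioi (1:ℝ), ENNReal.ofReal |F x| ≤ ENNReal.ofReal R := by
    calc ∫⁻ x in Ioi (1:ℝ), ENNReal.ofReal |F x|
        ≤ ∫⁻ x in Ioi (1:ℝ), ∫⁻ t : ℝ, H x t := lintegral_mono hpt
      _ = ∫⁻ t : ℝ, ∫⁻ x in Ioi (1:ℝ), H x t := hswap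
      _ ≤ ∫⁻ t : ℝ, (Ioi (1/2:ℝ)).indicator
            (fun s => ENNReal.ofReal (|g s| * Real.log (3*s))) t := lintegral_mono hinner
      _ = ∫⁻ t in Ioi (1/2:ℝ), ENNReal.ofReal (|g t| * Real.log (3*t)) := by
          rw [lintegral_indicator measurableSet_Ioi _]
      _ = ENNReal.ofReal R := by
          rw [hR, ← ofReal_integral_eq_lintegral_ofReal hlog]
          refine (ae_restrict_iff' measurableSet_Ioi).2 (ae_of_all _ fun t ht => ?_)
          simp only [mem_Ioi] at ht
          have : 0 < Real.log (3 * t) := Real.log_pos (by linarith)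
          positivity
  rw [hLHS]
  calc (∫⁻ x in Ioi (1:ℝ), ENNReal.ofReal |F x|).toReal
      ≤ (ENNReal.ofReal R).toReal := ENNReal.toReal_mono ENNReal.ofReal_ne_top hfinal
    _ = R := ENNReal.toReal_ofReal hRnn

/-- There is a constant `C > 0` such that for every integrable `g` on `(0,∞)` with
`∫_{1/2}^∞ |g(t)| log(3t) dt < ∞`,
`∫₁^∞ |∫_{x+1/2}^{3x/2} t g(t)/(x² − t²) dt| dx ≤ C ∫_{1/2}^∞ |g(t)| log(3t) dt`. -/
theorem right_middle_part_log_bound :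
    ∃ C : ℝ, 0 < C ∧ ∀ g : ℝ → ℝ, IntegrableOn g (Ioi (0 : ℝ)) →
      IntegrableOn (fun t => |g t| * Real.log (3 * t)) (Ioi (1 / 2 : ℝ)) →
      ∫ x in Ioi (1 : ℝ), |∫ t in Icc (x + 1 / 2) (3 / 2 * x), t * g t / (x ^ 2 - t ^ 2)|
        ≤ C * ∫ t in Ioi (1 / 2 : ℝ), |g t| * Real.log (3 * t) := by
  refine ⟨1, one_pos, fun g hg hlog => ?_⟩
  rw [one_mul]
  -- replace g by a measurable representative
  have hgm : AEMeasurable g (volume.restrict (Ioi (0:ℝ))) := hg.aemeasurable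
  set g0 : ℝ → ℝ := hgm.mk g with hg0
  have hg0m : Measurable g0 := hgm.measurable_mk
  have hae : g =ᵐ[volume.restrict (Ioi (0:ℝ))] g0 := hgm.ae_eq_mk
  -- transfer on Ioi (1/2)
  have hae12 : g =ᵐ[volume.restrict (Ioi (1/2:ℝ))] g0 :=
    ae_restrict_of_ae_restrict_of_subset (by intro t ht; exact lt_trans one_half_pos (mem_Ioi.mp ht)) hae
  have hRHSeq : ∫ t in Ioi (1/2 : ℝ), |g t| * Real.log (3 * t)
      = ∫ t in Ioi (1/2 : ℝ), |g0 t| * Real.log (3 * t) := by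
    apply integral_congr_ae
    filter_upwards [hae12] with t ht
    rw [ht]
  have hlog0 : IntegrableOn (fun t => |g0 t| * Real.log (3 * t)) (Ioi (1/2 : ℝ)) := by
    apply hlog.congr
    filter_upwards [hae12] with t ht
    rw [ht]
  -- transfer the inner integrals (for every x > 1)
  have hLHSeq : ∫ x in Ioi (1:ℝ), |∫ t in Icc (x + 1/2) (3/2 * x), t * g t / (x^2 - t^2)|
      = ∫ x in Ioi (1:ℝ), |∫ t in Icc (x + 1/2) (3/2 * x), t * g0 t / (x^2 - t^2)| := by
    apply setIntegral_congr_fun measurableSet_Ioi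
    intro x hx
    simp only [mem_Ioi] at hx
    dsimp only
    have hsub : Icc (x + 1/2) (3/2 * x) ⊆ Ioi (0:ℝ) := by
      intro t ht
      have := ht.1
      simp only [mem_Ioi]
      linarith
    have haex : g =ᵐ[volume.restrict (Icc (x + 1/2) (3/2 * x))] g0 :=
      ae_restrict_of_ae_restrict_of_subset hsub hae
    congr 1
    apply integral_congr_ae
    filter_upwards [haex] with t ht
    rw [ht]
  rw [hLHSeq, hRHSeq]
  exact aux_key g0 hg0m hlog0 (fun t => aux_inner g0 t aux_ftc)
end

section
/- Let g : (0,∞) → ℝ be integrable. Then ∫₀^∞ | ∫₀^{x/2} t² g(t)/(x (x² − t²)) dt | dx ≤ (1/6) ∫₀^∞ |g(t)| dt. -/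
open MeasureTheory Real Set
open scoped ENNReal

lemma aux_near_zero (g : ℝ → ℝ) (hg : IntegrableOn g (Ioi (0 : ℝ))) (hm : Measurable g) :
    ∫ x in Ioi (0 : ℝ), |∫ t in Ioc (0 : ℝ) (x / 2), t ^ 2 * g t / (x * (x ^ 2 - t ^ 2))|
      ≤ 1 / 6 * ∫ t in Ioi (0 : ℝ), |g t| := by
  set f : ℝ × ℝ → ℝ := fun p =>
    indicator {q : ℝ × ℝ | q.2 ∈ Ioc (0 : ℝ) (q.1 / 2)}
      (fun q => q.2 ^ 2 * g q.2 / (q.1 * (q.1 ^ 2 - q.2 ^ 2))) p with hf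
  have hmeasf : Measurable f := by
    apply Measurable.indicator
    · exact ((measurable_snd.pow_const 2).mul (hm.comp measurable_snd)).div
        (measurable_fst.mul ((measurable_fst.pow_const 2).sub (measurable_snd.pow_const 2)))
    · have hset : {q : ℝ × ℝ | q.2 ∈ Ioc (0 : ℝ) (q.1 / 2)}
          = {q : ℝ × ℝ | 0 < q.2} ∩ {q : ℝ × ℝ | q.2 ≤ q.1 / 2} := rfl
      rw [hset]
      exact (measurableSet_lt measurable_const measurable_snd).inter
        (measurableSet_le measurable_snd (measurable_fst.div_const 2))
  have hinner : ∀ x : ℝ,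
      (∫ t in Ioc (0 : ℝ) (x / 2), t ^ 2 * g t / (x * (x ^ 2 - t ^ 2))) = ∫ t, f (x, t) := by
    intro x
    rw [← integral_indicator measurableSet_Ioc]
    apply integral_congr_ae
    filter_upwards with t
    simp only [hf, Set.indicator_apply, mem_setOf_eq, mem_Ioc]
  have hFm : StronglyMeasurable fun x => ∫ t, f (x, t) :=
    hmeasf.stronglyMeasurable.integral_prod_right'
  -- pointwise bound for the swapped inner integral
  have hD : ∀ t : ℝ, (∫⁻ x, (‖f (x, t)‖₊ : ℝ≥0∞))
      ≤ indicator (Ioi (0 : ℝ)) (fun t => ENNReal.ofReal (|g t| / 6)) t := by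
    intro t
    by_cases ht : 0 < t
    · rw [indicator_of_mem (show t ∈ Ioi (0:ℝ) from ht)]
      set c : ℝ := 4 / 3 * t ^ 2 * |g t| with hc
      have hcnn : 0 ≤ c := by positivity
      have h2t : (0 : ℝ) < 2 * t := by linarith
      have hpt : ∀ x, (‖f (x, t)‖₊ : ℝ≥0∞)
          ≤ indicator (Ici (2 * t)) (fun x => ENNReal.ofReal (c * x ^ (-3 : ℝ))) x := by
        intro x
        by_cases hx : (x, t) ∈ {q : ℝ × ℝ | q.2 ∈ Ioc (0 : ℝ) (q.1 / 2)}
        · have hx' : t ≤ x / 2 := hx.2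
          have hxI : x ∈ Ici (2 * t) := by simp only [mem_Ici]; linarith
          rw [indicator_of_mem hxI]
          simp only [hf]
          rw [indicator_of_mem hx]
          have hxpos : (0 : ℝ) < x := by linarith
          have hx3 : x ^ (-3 : ℝ) = (x ^ 3)⁻¹ := by
            rw [show (-3 : ℝ) = -(3 : ℕ) by norm_num, Real.rpow_neg hxpos.le,
              Real.rpow_natCast]
          rw [← ENNReal.ofReal_coe_nnreal, coe_nnnorm, Real.norm_eq_abs]
          apply ENNReal.ofReal_le_ofReal
          have hxt1 : (0:ℝ) < x - t := by linarith
          have hxt2 : (0:ℝ) < x + t := by linarith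
          have hden : (0 : ℝ) < x * (x ^ 2 - t ^ 2) := by
            nlinarith [mul_pos hxpos (mul_pos hxt1 hxt2)]
          have h1 : |t ^ 2 * g t / (x * (x ^ 2 - t ^ 2))|
              = t ^ 2 * |g t| / (x * (x ^ 2 - t ^ 2)) := by
            rw [abs_div, abs_mul, abs_of_pos hden, abs_of_nonneg (by positivity : (0:ℝ) ≤ t ^ 2)]
          rw [h1, hx3, hc]
          have h34 : 3 / 4 * x ^ 2 ≤ x ^ 2 - t ^ 2 := by nlinarith
          calc t ^ 2 * |g t| / (x * (x ^ 2 - t ^ 2))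
              ≤ t ^ 2 * |g t| / (x * (3 / 4 * x ^ 2)) := by
                gcongr
            _ = 4 / 3 * t ^ 2 * |g t| * (x ^ 3)⁻¹ := by
                field_simp
        · simp only [hf]
          rw [indicator_of_notMem hx]
          simp
      calc (∫⁻ x, (‖f (x, t)‖₊ : ℝ≥0∞))
          ≤ ∫⁻ x, indicator (Ici (2 * t)) (fun x => ENNReal.ofReal (c * x ^ (-3 : ℝ))) x :=
            lintegral_mono hpt
        _ = ∫⁻ x in Ici (2 * t), ENNReal.ofReal (c * x ^ (-3 : ℝ)) :=
            lintegral_indicator measurableSet_Ici _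
        _ = ∫⁻ x in Ioi (2 * t), ENNReal.ofReal (c * x ^ (-3 : ℝ)) := by
            rw [Measure.restrict_congr_set MeasureTheory.Ioi_ae_eq_Ici.symm]
        _ = ENNReal.ofReal (∫ x in Ioi (2 * t), c * x ^ (-3 : ℝ)) := by
            refine (ofReal_integral_eq_lintegral_ofReal ?_ ?_).symm
            · exact (integrableOn_Ioi_rpow_of_lt (by norm_num) h2t).const_mul c
            · refine (ae_restrict_iff' measurableSet_Ioi).2 (Filter.Eventually.of_forall fun x hx => ?_)
              have hxpos : (0 : ℝ) < x := lt_trans h2t hx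
              exact mul_nonneg hcnn (Real.rpow_nonneg hxpos.le _)
        _ = ENNReal.ofReal (|g t| / 6) := by
            rw [integral_const_mul, integral_Ioi_rpow_of_lt (by norm_num) h2t]
            norm_num
            have h2t' : (2 * t) ^ (-2 : ℝ) = ((2 * t) ^ 2)⁻¹ := by
              rw [show (-2 : ℝ) = -(2 : ℕ) by norm_num, Real.rpow_neg h2t.le,
                Real.rpow_natCast]
            rw [hc]
            have htne : t ≠ 0 := ne_of_gt ht
            congr 1
            field_simp
            ring
    · have hz : ∀ x : ℝ, f (x, t) = 0 := by
        intro x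
        apply indicator_of_notMem
        simp only [mem_setOf_eq, mem_Ioc, not_and]
        intro h; exact absurd h ht
      simp [hz]
  -- main chain
  have hchain : (∫⁻ x in Ioi (0 : ℝ), (‖∫ t, f (x, t)‖₊ : ℝ≥0∞))
      ≤ ENNReal.ofReal (∫ t in Ioi (0 : ℝ), |g t| / 6) := by
    calc (∫⁻ x in Ioi (0 : ℝ), (‖∫ t, f (x, t)‖₊ : ℝ≥0∞))
        ≤ ∫⁻ x, (‖∫ t, f (x, t)‖₊ : ℝ≥0∞) := setLIntegral_le_lintegral _ _
      _ ≤ ∫⁻ x, ∫⁻ t, (‖f (x, t)‖₊ : ℝ≥0∞) :=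
          lintegral_mono fun x => enorm_integral_le_lintegral_enorm _
      _ = ∫⁻ t, ∫⁻ x, (‖f (x, t)‖₊ : ℝ≥0∞) :=
          lintegral_lintegral_swap (hmeasf.nnnorm.coe_nnreal_ennreal.aemeasurable)
      _ ≤ ∫⁻ t, indicator (Ioi (0 : ℝ)) (fun t => ENNReal.ofReal (|g t| / 6)) t :=
          lintegral_mono hD
      _ = ∫⁻ t in Ioi (0 : ℝ), ENNReal.ofReal (|g t| / 6) :=
          lintegral_indicator measurableSet_Ioi _
      _ = ENNReal.ofReal (∫ t in Ioi (0 : ℝ), |g t| / 6) := by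
          refine (ofReal_integral_eq_lintegral_ofReal (hg.abs.div_const 6)
            (Filter.Eventually.of_forall fun t => by positivity)).symm
  calc ∫ x in Ioi (0 : ℝ), |∫ t in Ioc (0 : ℝ) (x / 2), t ^ 2 * g t / (x * (x ^ 2 - t ^ 2))|
      = ∫ x in Ioi (0 : ℝ), ‖∫ t, f (x, t)‖ := by
        refine setIntegral_congr_fun measurableSet_Ioi fun x _ => ?_
        rw [hinner x, Real.norm_eq_abs]
    _ = (∫⁻ x in Ioi (0 : ℝ), (‖∫ t, f (x, t)‖₊ : ℝ≥0∞)).toReal := by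
        rw [integral_eq_lintegral_of_nonneg_ae (Filter.Eventually.of_forall fun x => norm_nonneg _)
          hFm.norm.aestronglyMeasurable]
        congr 1
        exact lintegral_congr fun x => (ofReal_norm _)
    _ ≤ (ENNReal.ofReal (∫ t in Ioi (0 : ℝ), |g t| / 6)).toReal :=
        ENNReal.toReal_mono ENNReal.ofReal_ne_top hchain
    _ = ∫ t in Ioi (0 : ℝ), |g t| / 6 :=
        ENNReal.toReal_ofReal (integral_nonneg fun t => by positivity)
    _ = 1 / 6 * ∫ t in Ioi (0 : ℝ), |g t| := by
        rw [integral_div]; ring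

/-- For integrable `g` on `(0,∞)`,
`∫₀^∞ |∫₀^{x/2} t² g(t)/(x(x² − t²)) dt| dx ≤ (1/6) ∫₀^∞ |g(t)| dt`. -/
theorem near_zero_part_even_hilbert_bound
    (g : ℝ → ℝ) (hg : IntegrableOn g (Ioi (0 : ℝ))) :
    ∫ x in Ioi (0 : ℝ), |∫ t in Ioc (0 : ℝ) (x / 2), t ^ 2 * g t / (x * (x ^ 2 - t ^ 2))|
      ≤ 1 / 6 * ∫ t in Ioi (0 : ℝ), |g t| := by
  obtain ⟨g', hg'm, hgg'⟩ :
      ∃ g' : ℝ → ℝ, Measurable g' ∧ g =ᵐ[volume.restrict (Ioi (0 : ℝ))] g' :=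
    ⟨hg.1.mk g, hg.1.stronglyMeasurable_mk.measurable, hg.1.ae_eq_mk⟩
  have hg' : IntegrableOn g' (Ioi (0 : ℝ)) := hg.congr hgg'
  have hL : (∫ x in Ioi (0 : ℝ), |∫ t in Ioc (0 : ℝ) (x / 2), t ^ 2 * g t / (x * (x ^ 2 - t ^ 2))|)
      = ∫ x in Ioi (0 : ℝ), |∫ t in Ioc (0 : ℝ) (x / 2), t ^ 2 * g' t / (x * (x ^ 2 - t ^ 2))| := by
    refine setIntegral_congr_fun measurableSet_Ioi fun x hx => ?_
    congr 1
    apply integral_congr_ae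
    have := ae_restrict_of_ae_restrict_of_subset (Ioc_subset_Ioi_self : Ioc (0:ℝ) (x/2) ⊆ Ioi 0) hgg'
    filter_upwards [this] with t hT
    rw [hT]
  have hR : (∫ t in Ioi (0 : ℝ), |g t|) = ∫ t in Ioi (0 : ℝ), |g' t| := by
    apply integral_congr_ae
    filter_upwards [hgg'] with t hT
    rw [hT]
  rw [hL, hR]
  exact aux_near_zero g' hg' hg'm
end
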